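/- arXiv:1501.00837 — 2 statements merged into one kernel-verified Lean document; each statement's English description precedes it below -/
import Mathlib

section
/- Let x̂^n(t) = Σ_{m=0}^{n−1} Σ_{k=0}^{2^m−1} e_{m,k}(t). Then max_{t∈[0,1]} x̂^n(t) = M_n, where M_n = (1/3)(2 + √2 + (−1)^{n+1} 2^{-n}(√2 − 1)) − 2^{-n/2}, and the maximum is attained exactly at the two points t_n^- = 2^{-n}(2^n − (−1)^n)/3 and t_n^+ = 1 − t_n^-. -/
noncomputable def e00 (t : ℝ) : ℝ := max (min t (1 - t)) 0

noncomputable def e (m : ℕ) (k : ℤ) (t : ℝ) : ℝ :=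
  (2 : ℝ) ^ (-(m : ℝ) / 2) * e00 ((2 : ℝ) ^ m * t - k)

noncomputable def xhatN (n : ℕ) (t : ℝ) : ℝ :=
  ∑ m ∈ Finset.range n, ∑ k ∈ Finset.range (2 ^ m), e m k t

noncomputable def M (n : ℕ) : ℝ :=
  (1 / 3) * (2 + Real.sqrt 2 + (-1 : ℝ) ^ (n + 1) * (2 : ℝ) ^ (-(n : ℤ)) * (Real.sqrt 2 - 1))
    - (2 : ℝ) ^ (-(n : ℝ) / 2)

noncomputable def tminus (n : ℕ) : ℝ :=
  (2 : ℝ) ^ (-(n : ℤ)) * (((2 : ℝ) ^ n - (-1 : ℝ) ^ n) / 3)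

local notation "s" => Real.sqrt 2

lemma s_pos : (0:ℝ) < s := by positivity
lemma s_sq : s * s = 2 := Real.mul_self_sqrt (by norm_num)
lemma s_lt : s < 3/2 := by
  nlinarith [s_sq, s_pos]
lemma s_gt : 1 < s := by
  nlinarith [s_sq, s_pos]

lemma e00_nonneg (t : ℝ) : 0 ≤ e00 t := le_max_right _ _
lemma e00_of_nonpos {t : ℝ} (h : t ≤ 0) : e00 t = 0 := by
  unfold e00; rw [max_eq_right]; exact min_le_of_left_le h |>.trans le_rfl
lemma e00_of_one_le {t : ℝ} (h : 1 ≤ t) : e00 t = 0 := by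
  unfold e00; rw [max_eq_right]; exact min_le_of_right_le (by linarith)
lemma e00_left {t : ℝ} (h0 : 0 ≤ t) (h1 : t ≤ 1/2) : e00 t = t := by
  unfold e00; rw [min_eq_left (by linarith), max_eq_left h0]
lemma e00_right {t : ℝ} (h0 : 1/2 ≤ t) (h1 : t ≤ 1) : e00 t = 1 - t := by
  unfold e00; rw [min_eq_right (by linarith), max_eq_left (by linarith)]
lemma e00_reflect (t : ℝ) : e00 (1 - t) = e00 t := by
  unfold e00
  rw [sub_sub_cancel, min_comm]

lemma pow_half_succ (m : ℕ) :
    (2 : ℝ) ^ (-((m+1 : ℕ) : ℝ) / 2) = s⁻¹ * (2:ℝ) ^ (-(m : ℝ) / 2) := by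
  rw [Real.sqrt_eq_rpow,
    show (-((m+1 : ℕ) : ℝ) / 2) = -(1/2) + -(m : ℝ)/2 by push_cast; ring,
    Real.rpow_add (by norm_num), Real.rpow_neg (by norm_num)]

lemma e_zero (t : ℝ) : e 0 0 t = e00 t := by
  unfold e
  norm_num

lemma xhat_one (t : ℝ) : xhatN 1 t = e00 t := by
  unfold xhatN
  simp [e_zero]
lemma inner_left {m : ℕ} {t : ℝ} (ht : t ≤ 1/2) :
    ∑ k ∈ Finset.range (2 ^ (m+1)), e (m+1) k t
      = s⁻¹ * ∑ k ∈ Finset.range (2 ^ m), e m k (2*t) := by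
  rw [Finset.mul_sum]
  rw [← Finset.sum_subset (Finset.range_subset_range.2 (Nat.pow_le_pow_right (by norm_num) (Nat.le_succ m)))]
  · apply Finset.sum_congr rfl
    intro k _
    unfold e
    rw [pow_half_succ]
    have harg : (2:ℝ) ^ (m+1) * t - (k:ℤ) = (2:ℝ)^m * (2*t) - (k:ℤ) := by ring
    rw [harg]; ring
  · intro k hk hk'
    unfold e
    have hk2 : (2:ℝ)^m ≤ (k : ℝ) := by
      have : (2:ℕ)^m ≤ k := Nat.le_of_not_lt (fun h => hk' (Finset.mem_range.2 h))
      exact_mod_cast this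
    have : (2:ℝ) ^ (m+1) * t - ((k:ℕ):ℤ) ≤ 0 := by
      push_cast
      have : (2:ℝ)^(m+1) * t ≤ (2:ℝ)^m := by
        have h2 : (0:ℝ) < (2:ℝ)^(m+1) := by positivity
        calc (2:ℝ)^(m+1) * t ≤ (2:ℝ)^(m+1) * (1/2) := by nlinarith
        _ = (2:ℝ)^m := by rw [pow_succ]; ring
      linarith
    rw [e00_of_nonpos (by exact_mod_cast this), mul_zero]

lemma inner_right {m : ℕ} {t : ℝ} (ht : 1/2 ≤ t) :
    ∑ k ∈ Finset.range (2 ^ (m+1)), e (m+1) k t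
      = s⁻¹ * ∑ k ∈ Finset.range (2 ^ m), e m k (2*t - 1) := by
  have h2 : (2:ℕ)^(m+1) = 2^m + 2^m := by rw [pow_succ]; ring
  rw [h2, Finset.sum_range_add, Finset.mul_sum]
  have hz : ∑ k ∈ Finset.range (2^m), e (m+1) k t = 0 := by
    apply Finset.sum_eq_zero
    intro k hk
    unfold e
    have hk2 : (k:ℝ) ≤ (2:ℝ)^m - 1 := by
      have : k + 1 ≤ (2:ℕ)^m := Finset.mem_range.1 hk
      have : ((k:ℝ) + 1) ≤ (2:ℝ)^m := by exact_mod_cast this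
      linarith
    have : (1:ℝ) ≤ (2:ℝ) ^ (m+1) * t - ((k:ℕ):ℤ) := by
      push_cast
      have : (2:ℝ)^m ≤ (2:ℝ)^(m+1) * t := by
        have h2 : (0:ℝ) < (2:ℝ)^(m+1) := by positivity
        calc (2:ℝ)^m = (2:ℝ)^(m+1) * (1/2) := by rw [pow_succ]; ring
        _ ≤ (2:ℝ)^(m+1) * t := by nlinarith
      linarith
    rw [e00_of_one_le (by exact_mod_cast this), mul_zero]
  rw [hz, zero_add]
  apply Finset.sum_congr rfl
  intro k _
  unfold e
  rw [pow_half_succ]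
  have harg : (2:ℝ) ^ (m+1) * t - ((2^m + k : ℕ) : ℤ) = (2:ℝ)^m * (2*t - 1) - (k:ℤ) := by
    push_cast; ring
  rw [harg]; ring

lemma xhat_succ_left {n : ℕ} {t : ℝ} (ht : t ≤ 1/2) :
    xhatN (n+1) t = e00 t + s⁻¹ * xhatN n (2*t) := by
  unfold xhatN
  rw [Finset.sum_range_succ']
  simp only [pow_zero, Finset.sum_range_one]
  have h0 : e 0 ((0:ℕ):ℤ) t = e00 t := by exact_mod_cast e_zero t
  rw [h0, add_comm]
  congr 1
  rw [Finset.mul_sum]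
  apply Finset.sum_congr rfl
  intro m _
  exact inner_left ht

lemma xhat_succ_right {n : ℕ} {t : ℝ} (ht : 1/2 ≤ t) :
    xhatN (n+1) t = e00 t + s⁻¹ * xhatN n (2*t - 1) := by
  unfold xhatN
  rw [Finset.sum_range_succ']
  simp only [pow_zero, Finset.sum_range_one]
  have h0 : e 0 ((0:ℕ):ℤ) t = e00 t := by exact_mod_cast e_zero t
  rw [h0, add_comm]
  congr 1
  rw [Finset.mul_sum]
  apply Finset.sum_congr rfl
  intro m _
  exact inner_right ht

lemma xhat_reflect (n : ℕ) (t : ℝ) : xhatN n (1 - t) = xhatN n t := by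
  unfold xhatN
  apply Finset.sum_congr rfl
  intro m _
  rw [← Finset.sum_range_reflect]
  apply Finset.sum_congr rfl
  intro k hk
  have hk' : k < 2^m := Finset.mem_range.1 hk
  unfold e
  congr 1
  rw [← e00_reflect ((2:ℝ)^m * (1-t) - ((2^m - 1 - k : ℕ) : ℤ))]
  congr 1
  have h1 : (1:ℕ) ≤ 2^m := Nat.one_le_two_pow
  have : ((2^m - 1 - k : ℕ) : ℝ) = (2:ℝ)^m - 1 - k := by
    have hk2 : k ≤ 2^m - 1 := Nat.le_sub_one_of_lt hk'
    push_cast [Nat.cast_sub hk2, Nat.cast_sub h1]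
    norm_num
  push_cast
  push_cast at this
  rw [this]
  ring
lemma rpow_half (n : ℕ) : (2:ℝ) ^ (-(n:ℝ)/2) = (s⁻¹)^n := by
  induction n with
  | zero => norm_num
  | succ k ih => rw [pow_half_succ, ih, pow_succ]; ring

lemma zpow_eq (n : ℕ) : (2:ℝ) ^ (-(n:ℤ)) = ((2:ℝ)^n)⁻¹ := by
  rw [zpow_neg, zpow_natCast]

lemma s_inv : s⁻¹ = s/2 := by
  have h0 : s ≠ 0 := ne_of_gt s_pos
  field_simp
  rw [sq, s_sq]

lemma tminus_eq (n : ℕ) : tminus n = (1 - (-1:ℝ)^n * ((2:ℝ)^n)⁻¹)/3 := by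
  unfold tminus
  rw [zpow_eq]
  have h : ((2:ℝ)^n) ≠ 0 := by positivity
  field_simp

lemma tminus_one : tminus 1 = 1/2 := by
  rw [tminus_eq]; norm_num

lemma tminus_succ (n : ℕ) : tminus (n+1) = (1 - tminus n)/2 := by
  rw [tminus_eq, tminus_eq]
  have h : ((2:ℝ)^n) ≠ 0 := by positivity
  rw [pow_succ, pow_succ]
  field_simp
  ring

lemma tminus_bounds : ∀ n : ℕ, 1 ≤ n → 1/4 ≤ tminus n ∧ tminus n ≤ 1/2 := by
  intro n hn
  induction n with
  | zero => omega
  | succ k ih =>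
    rcases Nat.eq_or_lt_of_le hn with h | h
    · rw [← h, tminus_one]; norm_num
    · have hk : 1 ≤ k := by omega
      obtain ⟨h1, h2⟩ := ih hk
      rw [tminus_succ]
      constructor <;> linarith

lemma M_one : M 1 = 1/2 := by
  unfold M
  have h1 : (2:ℝ) ^ (-((1:ℕ):ℝ)/2) = s⁻¹ := by
    have := rpow_half 1
    simpa using this
  have h2 : (2:ℝ) ^ (-((1:ℕ):ℤ)) = 1/2 := by norm_num
  push_cast at h1 h2 ⊢
  rw [h1, h2, s_inv]
  ring

lemma M_succ (n : ℕ) : M (n+1) = tminus (n+1) + s⁻¹ * M n := by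
  unfold M
  rw [tminus_eq]
  have hA1 : (-1:ℝ)^(n+1+1) = (-1:ℝ)^n := by rw [pow_succ, pow_succ]; ring
  have hA2 : (-1:ℝ)^(n+1) = -(-1:ℝ)^n := by rw [pow_succ]; ring
  have hB : (2:ℝ) ^ (-((n+1:ℕ):ℤ)) = ((2:ℝ)^n)⁻¹ / 2 := by
    push_cast
    rw [show (-((n:ℤ)+1)) = -(n:ℤ) + (-1) by ring, zpow_add₀ (by norm_num : (2:ℝ) ≠ 0),
      zpow_eq]
    norm_num
    ring
  have hD : (2:ℝ) ^ (-((n+1:ℕ):ℝ)/2) = s/2 * (2:ℝ) ^ (-(n:ℝ)/2) := by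
    rw [pow_half_succ, s_inv]
  push_cast at hB hD ⊢
  rw [hA1, hA2, hB, hD, zpow_eq, s_inv]
  linear_combination (((-1:ℝ)^n * ((2:ℝ)^n)⁻¹ - 1)/6) * s_sq
lemma base_case : ∀ c : ℝ, -1 < c → c < 1 → ∀ t : ℝ, 0 ≤ t → t ≤ 1 → t ≠ 1/2 →
    e00 t + c*t < e00 (1/2) + c*(1/2) := by
  intro c hc1 hc2 t ht0 ht1 htne
  have e1 : e00 (1/2 : ℝ) = 1/2 := by unfold e00; norm_num
  rw [e1]
  rcases le_or_gt t (1/2) with h | h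
  · have hlt : t < 1/2 := lt_of_le_of_ne h htne
    rw [e00_left ht0 h]
    nlinarith
  · rw [e00_right (le_of_lt h) ht1]
    nlinarith

lemma idL (n : ℕ) (c t : ℝ) (ht0 : 0 ≤ t) (ht2 : t ≤ 1/2) :
    xhatN (n+2) t + c*t = s⁻¹ * (xhatN (n+1) (2*t) + ((1+c)*s/2) * (2*t)) := by
  have hs0 : s ≠ 0 := ne_of_gt s_pos
  rw [xhat_succ_left ht2, e00_left ht0 ht2, mul_add]
  have h : s⁻¹ * ((1+c)*s/2 * (2*t)) = (1+c)*t := by field_simp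
  rw [h]; ring

lemma idR (n : ℕ) (c t : ℝ) (ht0 : 1/2 ≤ t) (ht2 : t ≤ 1) :
    xhatN (n+2) t + c*t = (1+c)/2 + s⁻¹ * (xhatN (n+1) (2*t-1) + ((c-1)*s/2) * (2*t-1)) := by
  have hs0 : s ≠ 0 := ne_of_gt s_pos
  rw [xhat_succ_right ht0, e00_right ht0 ht2, mul_add]
  have h : s⁻¹ * ((c-1)*s/2 * (2*t-1)) = (c-1)*(2*t-1)/2 := by field_simp
  rw [h]; ring

set_option maxHeartbeats 1600000 in
lemma key : ∀ n : ℕ,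
    (∀ c : ℝ, s - 1 ≤ c → c ≤ s/2 → ∀ t : ℝ, 0 ≤ t → t ≤ 1 → t ≠ 1 - tminus (n+1) →
      xhatN (n+1) t + c*t < xhatN (n+1) (1 - tminus (n+1)) + c*(1 - tminus (n+1))) ∧
    (∀ c : ℝ, 1 - s ≤ c → c ≤ (1-s)/2 → ∀ t : ℝ, 0 ≤ t → t ≤ 1 → t ≠ tminus (n+1) →
      xhatN (n+1) t + c*t < xhatN (n+1) (tminus (n+1)) + c*(tminus (n+1))) := by
  intro n
  induction n with
  | zero =>
    have hp : tminus 1 = 1/2 := tminus_one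
    have hs2 := s_sq
    have hsp := s_pos
    have hsl := s_lt
    have hsg := s_gt
    have h12 : (1:ℝ) - tminus 1 = 1/2 := by rw [hp]; norm_num
    constructor
    · intro c hc1 hc2 t ht0 ht1 htne
      rw [h12] at htne ⊢
      rw [xhat_one, xhat_one]
      exact base_case c (by nlinarith) (by nlinarith) t ht0 ht1 htne
    · intro c hc1 hc2 t ht0 ht1 htne
      rw [hp] at htne ⊢
      rw [xhat_one, xhat_one]
      exact base_case c (by nlinarith) (by nlinarith) t ht0 ht1 htne
  | succ n ih =>
    obtain ⟨ihP, ihM⟩ := ih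
    have hs2 := s_sq
    have hsp := s_pos
    have hsl := s_lt
    have hsg := s_gt
    have hs0 : s ≠ 0 := ne_of_gt hsp
    obtain ⟨hp1, hp2⟩ := tminus_bounds (n+1) (by omega)
    have hq : tminus (n+2) = (1 - tminus (n+1))/2 := tminus_succ (n+1)
    set p := tminus (n+1) with hpdef
    set q := tminus (n+2) with hqdef
    have h2q : 2*q = 1 - p := by rw [hq]; ring
    have hq0 : (0:ℝ) ≤ q := by rw [hq]; linarith
    have hq2 : q ≤ 1/2 := by rw [hq]; linarith
    constructor
    · -- S⁺ : c ∈ [s-1, s/2], unique max at 1-q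
      intro c hc1 hc2 t ht0 ht1 htne
      have hc0 : 0 < c := by nlinarith
      have hcc1 : 1 - s ≤ (c-1)*s/2 := by nlinarith
      have hcc2 : (c-1)*s/2 ≤ (1-s)/2 := by nlinarith
      have hRight : ∀ u : ℝ, 1/2 ≤ u → u ≤ 1 → u ≠ 1 - q →
          xhatN (n+2) u + c*u < xhatN (n+2) (1-q) + c*(1-q) := by
        intro u hu0 hu1 hune
        rw [idR n c u hu0 hu1, idR n c (1-q) (by linarith) (by linarith)]
        have harg : 2*(1-q) - 1 = p := by linarith
        rw [harg]
        have hne' : 2*u - 1 ≠ p := by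
          intro h; apply hune; linarith
        have := ihM ((c-1)*s/2) hcc1 hcc2 (2*u-1) (by linarith) (by linarith) hne'
        have hmul := mul_lt_mul_of_pos_left this (inv_pos.2 hsp)
        linarith
      have hRight_le : ∀ u : ℝ, 1/2 ≤ u → u ≤ 1 →
          xhatN (n+2) u + c*u ≤ xhatN (n+2) (1-q) + c*(1-q) := by
        intro u hu0 hu1
        by_cases h : u = 1 - q
        · rw [h]
        · exact le_of_lt (hRight u hu0 hu1 h)
      rcases le_or_gt (1/2) t with h | h
      · exact hRight t h ht1 htne
      · have hrefl : xhatN (n+2) t + c*t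
            = (xhatN (n+2) (1-t) + c*(1-t)) + c*(2*t-1) := by
          rw [← xhat_reflect (n+2) t]; ring
        rw [hrefl]
        have h1 := hRight_le (1-t) (by linarith) (by linarith)
        nlinarith
    · -- S⁻ : c ∈ [1-s, (1-s)/2], unique max at q
      intro c hc1 hc2 t ht0 ht1 htne
      have hc0 : c < 0 := by nlinarith
      have hcc1 : s - 1 ≤ (1+c)*s/2 := by nlinarith
      have hcc2 : (1+c)*s/2 ≤ s/2 := by nlinarith
      have hLeft : ∀ u : ℝ, 0 ≤ u → u ≤ 1/2 → u ≠ q →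
          xhatN (n+2) u + c*u < xhatN (n+2) q + c*q := by
        intro u hu0 hu1 hune
        rw [idL n c u hu0 hu1, idL n c q hq0 hq2]
        rw [h2q]
        have hne' : 2*u ≠ 1 - p := by
          intro h; apply hune; linarith
        have := ihP ((1+c)*s/2) hcc1 hcc2 (2*u) (by linarith) (by linarith) hne'
        have hmul := mul_lt_mul_of_pos_left this (inv_pos.2 hsp)
        linarith
      have hLeft_le : ∀ u : ℝ, 0 ≤ u → u ≤ 1/2 →
          xhatN (n+2) u + c*u ≤ xhatN (n+2) q + c*q := by
        intro u hu0 hu1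
        by_cases h : u = q
        · rw [h]
        · exact le_of_lt (hLeft u hu0 hu1 h)
      rcases le_or_gt t (1/2) with h | h
      · exact hLeft t ht0 h htne
      · have hrefl : xhatN (n+2) t + c*t
            = (xhatN (n+2) (1-t) + c*(1-t)) + c*(2*t-1) := by
          rw [← xhat_reflect (n+2) t]; ring
        rw [hrefl]
        have h1 := hLeft_le (1-t) (by linarith) (by linarith)
        nlinarith
lemma max_strict (n : ℕ) (hn : 1 ≤ n) :
    ∀ t : ℝ, 0 ≤ t → t ≤ 1 → t ≠ tminus n → t ≠ 1 - tminus n →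
      xhatN n t < xhatN n (tminus n) := by
  obtain ⟨k, rfl⟩ : ∃ k, n = k + 1 := ⟨n - 1, by omega⟩
  rcases Nat.eq_zero_or_pos k with rfl | hk
  · intro t ht0 ht1 htne _
    rw [xhat_one, xhat_one, tminus_one] at *
    have := base_case 0 (by norm_num) (by norm_num) t ht0 ht1 htne
    simpa using this
  · obtain ⟨m, rfl⟩ : ∃ m, k = m + 1 := ⟨k - 1, by omega⟩
    intro t ht0 ht1 htne htne'
    have hs2 := s_sq
    have hsp := s_pos
    have hsl := s_lt
    have hsg := s_gt
    obtain ⟨hp1, hp2⟩ := tminus_bounds (m+1) (by omega)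
    have hq : tminus (m+2) = (1 - tminus (m+1))/2 := tminus_succ (m+1)
    set p := tminus (m+1) with hpdef
    set q := tminus (m+2) with hqdef
    have h2q : 2*q = 1 - p := by rw [hq]; ring
    have hq0 : (0:ℝ) ≤ q := by rw [hq]; linarith
    have hq2 : q ≤ 1/2 := by rw [hq]; linarith
    have hkey := (key m).1 (s/2) (by nlinarith) le_rfl
    have hLeft : ∀ u : ℝ, 0 ≤ u → u ≤ 1/2 → u ≠ q →
        xhatN (m+2) u < xhatN (m+2) q := by
      intro u hu0 hu1 hune
      have h1 := idL m 0 u hu0 hu1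
      have h2 := idL m 0 q hq0 hq2
      rw [h2q] at h2
      have hne' : 2*u ≠ 1 - p := by intro h; apply hune; linarith
      have := hkey (2*u) (by linarith) (by linarith) hne'
      have hmul := mul_lt_mul_of_pos_left this (inv_pos.2 hsp)
      have e1 : (1+(0:ℝ))*s/2 = s/2 := by ring
      rw [e1] at h1 h2
      nlinarith [hmul, h1, h2]
    rcases le_or_gt t (1/2) with h | h
    · exact hLeft t ht0 h htne
    · rw [← xhat_reflect (m+2) t]
      exact hLeft (1-t) (by linarith) (by linarith) (fun hcon => htne' (by linarith))

lemma xhat_at_p : ∀ n : ℕ, 1 ≤ n → xhatN n (tminus n) = M n := by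
  intro n hn
  induction n with
  | zero => omega
  | succ k ih =>
    rcases Nat.eq_zero_or_pos k with rfl | hk
    · rw [tminus_one, xhat_one, M_one, e00_left (by norm_num) (by norm_num)]
    · obtain ⟨hp1, hp2⟩ := tminus_bounds k hk
      obtain ⟨hq1, hq2⟩ := tminus_bounds (k+1) (by omega)
      have hq : tminus (k+1) = (1 - tminus k)/2 := tminus_succ k
      rw [xhat_succ_left hq2, e00_left (by linarith) hq2]
      have h2q : 2*tminus (k+1) = 1 - tminus k := by rw [hq]; ring
      rw [h2q, xhat_reflect, ih hk, M_succ]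
theorem stmt_4 (n : ℕ) (hn : 1 ≤ n) :
    (∀ t ∈ Set.Icc (0 : ℝ) 1, xhatN n t ≤ M n) ∧
    xhatN n (tminus n) = M n ∧ xhatN n (1 - tminus n) = M n ∧
    (∀ t ∈ Set.Icc (0 : ℝ) 1, xhatN n t = M n → t = tminus n ∨ t = 1 - tminus n) := by
  have hval : xhatN n (tminus n) = M n := xhat_at_p n hn
  have hval' : xhatN n (1 - tminus n) = M n := by rw [xhat_reflect, hval]
  refine ⟨?_, hval, hval', ?_⟩
  · rintro t ⟨ht0, ht1⟩
    by_cases h1 : t = tminus n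
    · rw [h1, hval]
    by_cases h2 : t = 1 - tminus n
    · rw [h2, hval']
    · rw [← hval]
      exact le_of_lt (max_strict n hn t ht0 ht1 h1 h2)
  · rintro t ⟨ht0, ht1⟩ heq
    by_contra hcon
    push_neg at hcon
    obtain ⟨h1, h2⟩ := hcon
    have := max_strict n hn t ht0 ht1 h1 h2
    rw [hval, heq] at this
    exact lt_irrefl _ this
end

section
/- Let x* = e_{0,0} + Σ_{m≥1}(Σ_{k=0}^{2^{m−1}−1} e_{m,k} − Σ_{ℓ=2^{m−1}}^{2^m−1} e_{m,ℓ}). Then x* coincides with x̂ on [0,1/2], and −x*(t) = x̂(t − 1/2) − 1/2 for t ∈ [1/2, 1]. In particular, the minimum of x* on [0,1] equals 1/2 − (2 + √2)/3 and is attained at t = 5/6. -/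
noncomputable def xhat (t : ℝ) : ℝ :=
  ∑' m : ℕ, ∑ k ∈ Finset.range (2 ^ m), e m k t

noncomputable def θstar (m k : ℕ) : ℝ :=
  if m = 0 then 1 else if k < 2 ^ (m - 1) then 1 else -1

noncomputable def xstar (t : ℝ) : ℝ :=
  ∑' m : ℕ, ∑ k ∈ Finset.range (2 ^ m), θstar m k * e m k t

namespace FS

noncomputable def aa : ℝ := (Real.sqrt 2)⁻¹
noncomputable def D (y : ℝ) : ℝ := e00 (Int.fract y)

lemma s_pos : (0:ℝ) < Real.sqrt 2 := Real.sqrt_pos.2 (by norm_num)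
lemma s_sq : Real.sqrt 2 * Real.sqrt 2 = 2 := Real.mul_self_sqrt (by norm_num)
lemma s_gt : (1:ℝ) < Real.sqrt 2 := by nlinarith [s_sq, s_pos]
lemma s_lt : Real.sqrt 2 < 3/2 := by nlinarith [s_sq, s_pos]
lemma aa_nonneg : 0 ≤ aa := inv_nonneg.2 (le_of_lt s_pos)
lemma aa_lt : aa < 1 := by
  rw [aa, inv_eq_one_div, div_lt_one s_pos]; exact s_gt
lemma aa_eq : aa = Real.sqrt 2 / 2 := by
  rw [aa, inv_eq_one_div, div_eq_div_iff (ne_of_gt s_pos) (by norm_num : (2:ℝ) ≠ 0)]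
  nlinarith [s_sq]

lemma e00_nonneg (x : ℝ) : 0 ≤ e00 x := le_max_right _ _
lemma e00_zero_of_nonpos {x : ℝ} (h : x ≤ 0) : e00 x = 0 := by
  rw [e00, max_eq_right]; exact le_trans (min_le_left _ _) h
lemma e00_zero_of_one_le {x : ℝ} (h : 1 ≤ x) : e00 x = 0 := by
  rw [e00, max_eq_right]; exact le_trans (min_le_right _ _) (by linarith)
lemma e00_eq_min {x : ℝ} (h0 : 0 ≤ x) (h1 : x ≤ 1) : e00 x = min x (1 - x) := by
  rw [e00, max_eq_left]; exact le_min h0 (by linarith)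
lemma e00_le_half (x : ℝ) : e00 x ≤ 1/2 := by
  rw [e00]; rcases le_total x (1/2) with h | h
  · exact max_le (le_trans (min_le_left _ _) h) (by norm_num)
  · exact max_le (le_trans (min_le_right _ _) (by linarith)) (by norm_num)

lemma D_nonneg (y : ℝ) : 0 ≤ D y := e00_nonneg _
lemma D_le_half (y : ℝ) : D y ≤ 1/2 := e00_le_half _

lemma coeff_eq (m : ℕ) : (2:ℝ) ^ (-(m:ℝ)/2) = aa ^ m := by
  have h2 : (0:ℝ) ≤ 2 := by norm_num
  rw [show -(m:ℝ)/2 = (-(1/2:ℝ)) * m by ring, Real.rpow_mul h2, Real.rpow_natCast]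
  congr 1
  rw [Real.rpow_neg h2, ← Real.sqrt_eq_rpow, aa]

lemma e_eq (m : ℕ) (k : ℤ) (t : ℝ) :
    e m k t = aa ^ m * e00 ((2:ℝ)^m * t - k) := by rw [e, coeff_eq]

lemma e_nonneg (m : ℕ) (k : ℤ) (t : ℝ) : 0 ≤ e m k t := by
  rw [e_eq]; exact mul_nonneg (pow_nonneg aa_nonneg m) (e00_nonneg _)

lemma D_two_mul (y : ℝ) : D (2*y) = min (2 * D y) (1 - 2 * D y) := by
  have hu0 := Int.fract_nonneg y
  have hu1 := Int.fract_lt_one y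
  have hrec : y - ⌊y⌋ = Int.fract y := Int.self_sub_floor y
  have h2y : Int.fract (2*y) = Int.fract (2 * Int.fract y) := by
    have h : 2*y = 2 * Int.fract y + ((2*⌊y⌋ : ℤ) : ℝ) := by push_cast; linarith
    rw [h, Int.fract_add_intCast]
  rcases lt_or_ge (Int.fract y) (1/2) with h | h
  · have hf : Int.fract (2 * Int.fract y) = 2 * Int.fract y :=
      Int.fract_eq_self.2 ⟨by linarith, by linarith⟩
    have hDy : D y = Int.fract y := by
      rw [D, e00_eq_min hu0 (by linarith)]
      exact min_eq_left (by linarith)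
    rw [hDy, D, h2y, hf, e00_eq_min (by linarith) (by linarith)]
  · have hf : Int.fract (2 * Int.fract y) = 2 * Int.fract y - 1 := by
      have h1 := Int.fract_sub_intCast (2 * Int.fract y) 1
      rw [Int.cast_one] at h1
      rw [← h1]
      exact Int.fract_eq_self.2 ⟨by linarith, by linarith⟩
    have hDy : D y = 1 - Int.fract y := by
      rw [D, e00_eq_min hu0 (by linarith)]
      exact min_eq_right (by linarith)
    rw [hDy, D, h2y, hf, e00_eq_min (by linarith) (by linarith), min_comm]
    congr 1 <;> ring

lemma sum_e00_eq (N : ℕ) (y : ℝ) (h0 : 0 ≤ y) (hN : y ≤ N) :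
    ∑ k ∈ Finset.range N, e00 (y - k) = e00 (Int.fract y) := by
  by_cases hf : Int.fract y = 0
  · have hy : y = (⌊y⌋ : ℝ) := by
      have := Int.self_sub_floor y; rw [hf] at this; linarith
    rw [hf, e00_zero_of_nonpos le_rfl]
    apply Finset.sum_eq_zero
    intro k hk
    have hint : y - k = ((⌊y⌋ - k : ℤ) : ℝ) := by push_cast; linarith
    rcases le_or_gt (y - k) 0 with h | h
    · exact e00_zero_of_nonpos h
    · apply e00_zero_of_one_le
      have : (0:ℤ) < ⌊y⌋ - k := by exact_mod_cast hint ▸ h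
      have : (1:ℤ) ≤ ⌊y⌋ - k := this
      calc (1:ℝ) = ((1:ℤ):ℝ) := by norm_num
        _ ≤ ((⌊y⌋ - k : ℤ):ℝ) := by exact_mod_cast this
        _ = y - k := hint.symm
  · have hfl : (0:ℤ) ≤ ⌊y⌋ := Int.floor_nonneg.2 h0
    set j := ⌊y⌋.toNat with hjdef
    have hj : (j:ℝ) = (⌊y⌋:ℝ) := by exact_mod_cast Int.toNat_of_nonneg hfl
    have hfr0 : 0 < Int.fract y := lt_of_le_of_ne (Int.fract_nonneg y) (Ne.symm hf)
    have hfr1 : Int.fract y < 1 := Int.fract_lt_one y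
    have hflo := Int.self_sub_floor y
    have hjy : (j:ℝ) < y := by rw [hj]; linarith
    have hyj : y < (j:ℝ) + 1 := by rw [hj]; linarith
    have hjN : j < N := by
      by_contra hcon
      push_neg at hcon
      have : (N:ℝ) ≤ (j:ℝ) := by exact_mod_cast hcon
      linarith
    rw [Finset.sum_eq_single j]
    · congr 1; rw [hj]; linarith
    · intro k hk hne
      rcases lt_or_gt_of_ne hne with hlt | hgt
      · apply e00_zero_of_one_le
        have : (k:ℝ) + 1 ≤ (j:ℝ) := by exact_mod_cast hlt
        linarith
      · apply e00_zero_of_nonpos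
        have : (j:ℝ) + 1 ≤ (k:ℝ) := by exact_mod_cast hgt
        linarith
    · intro hcon
      exact absurd (Finset.mem_range.2 hjN) hcon

lemma inner_eq (m : ℕ) (t : ℝ) (h0 : 0 ≤ t) (h1 : t ≤ 1) :
    ∑ k ∈ Finset.range (2 ^ m), e m k t = aa ^ m * D ((2:ℝ)^m * t) := by
  have hpow : (0:ℝ) < (2:ℝ)^m := by positivity
  have hcast : ((2^m : ℕ) : ℝ) = (2:ℝ)^m := by push_cast; ring
  have hsum := sum_e00_eq (2^m) ((2:ℝ)^m * t) (by positivity) (by rw [hcast]; nlinarith)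
  unfold D
  rw [← hsum, Finset.mul_sum]
  apply Finset.sum_congr rfl
  intro k _
  rw [e_eq]
  congr 2

lemma summable_aux (y : ℝ) : Summable (fun m : ℕ => aa ^ m * D ((2:ℝ)^m * y)) := by
  apply Summable.of_nonneg_of_le
    (fun m => mul_nonneg (pow_nonneg aa_nonneg m) (D_nonneg _))
    (fun m => ?_) (summable_geometric_of_lt_one aa_nonneg aa_lt)
  calc aa ^ m * D ((2:ℝ)^m * y) ≤ aa ^ m * 1 := by
        apply mul_le_mul_of_nonneg_left _ (pow_nonneg aa_nonneg m)
        linarith [D_le_half ((2:ℝ)^m * y)]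
    _ = aa ^ m := mul_one _

lemma summable_xhat (t : ℝ) (h0 : 0 ≤ t) (h1 : t ≤ 1) :
    Summable (fun m : ℕ => ∑ k ∈ Finset.range (2 ^ m), e m k t) :=
  (summable_aux t).congr (fun m => (inner_eq m t h0 h1).symm)

noncomputable def phi (x : ℝ) : ℝ :=
  (2 + Real.sqrt 2)/3 - (if x ≤ 1/3 then 1/3 - x else (Real.sqrt 2 - 1) * (x - 1/3))

lemma phi_nonneg {x : ℝ} (h0 : 0 ≤ x) (h1 : x ≤ 1/2) : 0 ≤ phi x := by
  rw [phi]; split_ifs with h <;> nlinarith [s_sq, s_gt, s_lt]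

lemma phi_le {x : ℝ} (h0 : 0 ≤ x) (h1 : x ≤ 1/2) : phi x ≤ (2 + Real.sqrt 2)/3 := by
  rw [phi]; split_ifs with h <;> nlinarith [s_sq, s_gt, s_lt]

lemma key {x : ℝ} (h0 : 0 ≤ x) (h1 : x ≤ 1/2) :
    x + aa * phi (min (2*x) (1 - 2*x)) ≤ phi x := by
  rw [aa_eq]
  rcases le_total x (1/4) with h | h
  · rw [min_eq_left (by linarith)]
    rw [phi, phi]
    split_ifs with ha hb hb <;> nlinarith [s_sq, s_gt, s_lt]
  · rw [min_eq_right (by linarith)]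
    rw [phi, phi]
    split_ifs with ha hb hb <;> nlinarith [s_sq, s_gt, s_lt]

lemma main_bound : ∀ (n : ℕ) (y : ℝ),
    ∑ m ∈ Finset.range n, aa ^ m * D ((2:ℝ)^m * y) ≤ phi (D y) := by
  intro n
  induction n with
  | zero => intro y; simpa using phi_nonneg (D_nonneg y) (D_le_half y)
  | succ n ih =>
    intro y
    rw [Finset.sum_range_succ']
    have hshift : ∑ m ∈ Finset.range n, aa ^ (m+1) * D ((2:ℝ)^(m+1) * y)
        = aa * ∑ m ∈ Finset.range n, aa ^ m * D ((2:ℝ)^m * (2*y)) := by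
      rw [Finset.mul_sum]
      apply Finset.sum_congr rfl
      intro m _
      have harg : (2:ℝ)^(m+1) * y = (2:ℝ)^m * (2*y) := by rw [pow_succ]; ring
      rw [harg, pow_succ]; ring
    rw [hshift]
    have h2 : aa * ∑ m ∈ Finset.range n, aa ^ m * D ((2:ℝ)^m * (2*y))
        ≤ aa * phi (D (2*y)) := mul_le_mul_of_nonneg_left (ih (2*y)) aa_nonneg
    have hkey := key (D_nonneg y) (D_le_half y)
    rw [← D_two_mul y] at hkey
    have h0 : aa ^ 0 * D ((2:ℝ)^0 * y) = D y := by norm_num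
    rw [h0]
    linarith

lemma xhat_repr (t : ℝ) (h0 : 0 ≤ t) (h1 : t ≤ 1) :
    xhat t = ∑' m : ℕ, aa ^ m * D ((2:ℝ)^m * t) :=
  tsum_congr (fun m => inner_eq m t h0 h1)

lemma xhat_le (t : ℝ) (h0 : 0 ≤ t) (h1 : t ≤ 1) : xhat t ≤ (2 + Real.sqrt 2)/3 := by
  rw [xhat_repr t h0 h1]
  calc ∑' m : ℕ, aa ^ m * D ((2:ℝ)^m * t) ≤ phi (D t) :=
        Summable.tsum_le_of_sum_range_le (summable_aux t) (fun n => main_bound n t)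
    _ ≤ _ := phi_le (D_nonneg t) (D_le_half t)

lemma xhat_nonneg (t : ℝ) : 0 ≤ xhat t :=
  tsum_nonneg fun m => Finset.sum_nonneg fun k _ => e_nonneg m k t


lemma D_pow_third : ∀ m : ℕ, D ((2:ℝ)^m * (1/3)) = 1/3 := by
  intro m
  induction m with
  | zero =>
    have h : Int.fract ((1:ℝ)/3) = 1/3 := Int.fract_eq_self.2 (by norm_num)
    rw [pow_zero, one_mul, D, h, e00_eq_min (by norm_num) (by norm_num)]
    norm_num
  | succ n ih =>
    have harg : (2:ℝ)^(n+1) * (1/3) = 2 * ((2:ℝ)^n * (1/3)) := by rw [pow_succ]; ring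
    rw [harg, D_two_mul, ih]
    norm_num

lemma xhat_third : xhat (1/3) = (2 + Real.sqrt 2)/3 := by
  rw [xhat_repr (1/3) (by norm_num) (by norm_num)]
  have h : ∀ m : ℕ, aa ^ m * D ((2:ℝ)^m * (1/3)) = aa ^ m * (1/3) := by
    intro m; rw [D_pow_third]
  rw [tsum_congr h, tsum_mul_right, tsum_geometric_of_lt_one aa_nonneg aa_lt]
  rw [aa_eq]
  have h3 : (1 - Real.sqrt 2 / 2) * (2 + Real.sqrt 2) = 1 := by nlinarith [s_sq]
  rw [inv_eq_of_mul_eq_one_right h3]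
  ring

lemma pow_split {m : ℕ} (hm : 1 ≤ m) : 2^m = 2^(m-1) + 2^(m-1) := by
  obtain ⟨n, rfl⟩ := Nat.exists_eq_add_of_le hm
  simp only [Nat.add_sub_cancel_left, pow_add, pow_one]
  try omega

lemma two_pow_real {m : ℕ} (hm : 1 ≤ m) : (2:ℝ)^m = 2 * (2:ℝ)^(m-1) := by
  obtain ⟨n, rfl⟩ := Nat.exists_eq_add_of_le hm
  simp only [Nat.add_sub_cancel_left, pow_add, pow_one]
  try ring

lemma e_zero_hi {m : ℕ} {k : ℕ} {t : ℝ} (h : (2:ℝ)^m * t ≤ (k:ℝ)) : e m k t = 0 := by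
  rw [e_eq, e00_zero_of_nonpos (by push_cast; linarith), mul_zero]

lemma e_zero_lo {m : ℕ} {k : ℕ} {t : ℝ} (h : (k:ℝ) + 1 ≤ (2:ℝ)^m * t) : e m k t = 0 := by
  rw [e_eq, e00_zero_of_one_le (by push_cast; linarith), mul_zero]

lemma theta_mul {t : ℝ} (ht0 : 0 ≤ t) (ht1 : t ≤ 1/2) (m k : ℕ) :
    θstar m k * e m k t = e m k t := by
  rw [θstar]
  split_ifs with h1 h2
  · rw [one_mul]
  · rw [one_mul]
  · have hm : 1 ≤ m := Nat.one_le_iff_ne_zero.2 h1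
    have hkr : (2:ℝ)^(m-1) ≤ (k:ℝ) := by exact_mod_cast Nat.not_lt.1 h2
    have he : e m k t = 0 := by
      apply e_zero_hi
      have hp : (0:ℝ) < (2:ℝ)^(m-1) := by positivity
      rw [two_pow_real hm]
      nlinarith
    rw [he, mul_zero]

lemma claim1 (t : ℝ) (ht0 : 0 ≤ t) (ht1 : t ≤ 1/2) : xstar t = xhat t := by
  rw [xstar, xhat]
  apply tsum_congr
  intro m
  exact Finset.sum_congr rfl (fun k _ => theta_mul ht0 ht1 m k)

lemma inner_star {t : ℝ} (ht0 : 1/2 ≤ t) (ht1 : t ≤ 1) {m : ℕ} (hm : 1 ≤ m) :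
    ∑ k ∈ Finset.range (2^m), θstar m k * e m k t
      = -∑ k ∈ Finset.range (2^m), e m k (t - 1/2) := by
  have hm0 : m ≠ 0 := by omega
  set h := 2^(m-1) with hh
  have hp : (0:ℝ) < (2:ℝ)^(m-1) := by positivity
  have hcast : ((h:ℕ):ℝ) = (2:ℝ)^(m-1) := by rw [hh]; push_cast; try ring
  have h2m : (2:ℝ)^m = 2 * (2:ℝ)^(m-1) := two_pow_real hm
  -- RHS sum truncates to range h
  have hRHS : ∑ k ∈ Finset.range (2^m), e m k (t - 1/2)
      = ∑ k ∈ Finset.range h, e m k (t - 1/2) := by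
    symm
    apply Finset.sum_subset (Finset.range_subset_range.2
      (by rw [hh]; exact Nat.pow_le_pow_right (by norm_num) (by omega)))
    intro k hk hknot
    have hkh : h ≤ k := by
      simp only [Finset.mem_range, not_lt] at hknot
      exact hknot
    apply e_zero_hi
    have : ((h:ℕ):ℝ) ≤ (k:ℝ) := by exact_mod_cast hkh
    rw [h2m]
    nlinarith [hcast ▸ this]
  -- LHS splitting
  have hsplit : ∑ k ∈ Finset.range (2^m), θstar m k * e m k t
      = (∑ k ∈ Finset.range h, θstar m k * e m k t)
        + ∑ k ∈ Finset.range h, θstar m (h + k) * e m (h + k : ℕ) t := by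
    rw [pow_split hm, ← hh, Finset.range_eq_Ico,
      ← Finset.sum_Ico_consecutive _ (Nat.zero_le h) (Nat.le_add_right h h),
      Finset.sum_Ico_eq_sum_range, Finset.sum_Ico_eq_sum_range]
    simp
  have hfirst : ∀ k ∈ Finset.range h, θstar m k * e m k t = 0 := by
    intro k hk
    have hkh : k < h := Finset.mem_range.1 hk
    have hzero : e m k t = 0 := by
      apply e_zero_lo
      have : (k:ℝ) + 1 ≤ ((h:ℕ):ℝ) := by exact_mod_cast hkh
      rw [h2m]
      nlinarith [hcast ▸ this]
    rw [hzero, mul_zero]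
  have hsecond : ∀ k ∈ Finset.range h, θstar m (h + k) * e m (h + k : ℕ) t
      = -(e m k (t - 1/2)) := by
    intro k hk
    have hθ : θstar m (h + k) = -1 := by
      rw [θstar, if_neg hm0, if_neg (by rw [← hh]; omega)]
    rw [hθ, neg_one_mul]
    congr 1
    rw [e_eq, e_eq]
    congr 2
    push_cast
    rw [h2m]
    have := hcast
    push_cast at this
    ring_nf
    ring_nf at this
    nlinarith [this]
  rw [hsplit, Finset.sum_eq_zero hfirst, zero_add, Finset.sum_congr rfl hsecond,
    hRHS, ← Finset.sum_neg_distrib]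

lemma e00_right {t : ℝ} (h0 : 1/2 ≤ t) (h1 : t ≤ 1) : e00 t = 1 - t := by
  rw [e00, min_eq_right (by linarith), max_eq_left (by linarith)]

lemma e00_left {t : ℝ} (h0 : 0 ≤ t) (h1 : t ≤ 1/2) : e00 t = t := by
  rw [e00, min_eq_left (by linarith), max_eq_left (by linarith)]

set_option maxHeartbeats 1000000 in
lemma claim2' (s : ℝ) (hs0 : 0 ≤ s) (hs1 : s ≤ 1/2) :
    -xstar (s + 1/2) = xhat s - 1/2 := by
  have ht0 : 1/2 ≤ s + 1/2 := by linarith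
  have ht1 : s + 1/2 ≤ 1 := by linarith
  have hd : Summable (fun m : ℕ => ∑ k ∈ Finset.range (2^m), e m k s) :=
    summable_xhat s hs0 (by linarith)
  have hdsh := (summable_nat_add_iff (f := fun m : ℕ =>
    ∑ k ∈ Finset.range (2^m), e m k s) 1).2 hd
  have hinner : ∀ n : ℕ,
      ∑ k ∈ Finset.range (2^(n+1)), θstar (n+1) k * e (n+1) k (s + 1/2)
        = -∑ k ∈ Finset.range (2^(n+1)), e (n+1) k s := by
    intro n
    have := inner_star ht0 ht1 (by omega : 1 ≤ n + 1)
    rw [show s + 1/2 - 1/2 = s by ring] at this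
    exact this
  have hcsh : Summable
      (fun n : ℕ => ∑ k ∈ Finset.range (2^(n+1)), θstar (n+1) k * e (n+1) k (s + 1/2)) := by
    apply Summable.congr hdsh.neg
    intro n
    exact (hinner n).symm
  have hc : Summable
      (fun m : ℕ => ∑ k ∈ Finset.range (2^m), θstar m k * e m k (s + 1/2)) :=
    (summable_nat_add_iff 1).1 (by exact hcsh)
  have e0t : ∑ k ∈ Finset.range (2^0), θstar 0 k * e 0 (k : ℕ) (s + 1/2) = 1 - (s + 1/2) := by
    rw [pow_zero, Finset.sum_range_one, e_eq]
    have hθ : θstar 0 0 = 1 := by rw [θstar]; norm_num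
    rw [hθ]
    norm_num
    exact e00_right ht0 ht1
  have e0s : ∑ k ∈ Finset.range (2^0), e 0 (k : ℕ) s = s := by
    rw [pow_zero, Finset.sum_range_one, e_eq]
    norm_num
    exact e00_left hs0 hs1
  have hxstar : xstar (s + 1/2) = (1 - (s + 1/2))
      + ∑' n : ℕ, ∑ k ∈ Finset.range (2^(n+1)), θstar (n+1) k * e (n+1) k (s + 1/2) := by
    rw [xstar, Summable.tsum_eq_zero_add hc, e0t]
  have hxhat : xhat s = s
      + ∑' n : ℕ, ∑ k ∈ Finset.range (2^(n+1)), e (n+1) k s := by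
    rw [xhat, Summable.tsum_eq_zero_add hd, e0s]
  have hneg : ∑' n : ℕ, ∑ k ∈ Finset.range (2^(n+1)), θstar (n+1) k * e (n+1) k (s + 1/2)
      = -∑' n : ℕ, ∑ k ∈ Finset.range (2^(n+1)), e (n+1) k s := by
    rw [← tsum_neg]
    exact tsum_congr hinner
  rw [hxstar, hneg, hxhat]
  ring

lemma claim2 (t : ℝ) (ht0 : 1/2 ≤ t) (ht1 : t ≤ 1) :
    -xstar t = xhat (t - 1/2) - 1/2 := by
  have := claim2' (t - 1/2) (by linarith) (by linarith)
  rw [show t - 1/2 + 1/2 = t by ring] at this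
  exact this

end FS

theorem stmt_9 :
    (∀ t ∈ Set.Icc (0 : ℝ) (1 / 2), xstar t = xhat t) ∧
    (∀ t ∈ Set.Icc (1 / 2 : ℝ) 1, -xstar t = xhat (t - 1 / 2) - 1 / 2) ∧
    (∀ t ∈ Set.Icc (0 : ℝ) 1, 1 / 2 - (2 + Real.sqrt 2) / 3 ≤ xstar t) ∧
    xstar (5 / 6) = 1 / 2 - (2 + Real.sqrt 2) / 3 := by
  refine ⟨fun t ht => FS.claim1 t ht.1 ht.2, fun t ht => FS.claim2 t ht.1 ht.2, ?_, ?_⟩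
  · intro t ht
    rcases le_total t (1/2) with h | h
    · rw [FS.claim1 t ht.1 h]
      have h1 := FS.xhat_nonneg t
      have h2 := FS.s_pos
      linarith
    · have h2 := FS.claim2 t h ht.2
      have h1 := ht.1
      have h4 := ht.2
      have h3 := FS.xhat_le (t - 1/2) (by linarith) (by linarith)
      linarith
  · have h2 := FS.claim2 (5/6) (by norm_num) (by norm_num)
    rw [show (5/6 : ℝ) - 1/2 = 1/3 by norm_num, FS.xhat_third] at h2
    linarith
end
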